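/- Let (G,E) be a contracting, regular self-similar groupoid action on a finite directed graph E with no sinks and no sources. Suppose x, y ∈ E^ℤ are asymptotically equivalent bi-infinite paths and that there exists n ∈ ℤ with x_m = y_m for all m ≤ n. Then x = y. -/

import Mathlib

/-!
Self-similar groupoid actions on finite directed graphs, following
Brownlowe–Buss–Gonçalves–Hume–Sims–Whittaker,
"KK-duality for self-similar groupoid actions on graphs".

A directed graph is given by a vertex type `V`, an edge type `E` and
range/source maps `rE sE : E → V`.  A finite path is modelled as a list of
edges together with a base vertex (its range): the list `[e₁, …, eₙ]` is the
path `e₁ … eₙ` read from left to right, so consecutive edges satisfy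
`sE eᵢ = rE eᵢ₊₁`.  The groupoid of a self-similar action, its partial
multiplication, the action on finite paths and the restriction maps are
modelled as total functions whose values are only constrained (by the axioms
of the structure `SSA`) on their natural domains.
-/

universe u

namespace SSG

variable {V E : Type u}

/-- `l` is a trail: the source of each edge is the range of the next. -/
def IsTrail (rE sE : E → V) (l : List E) : Prop :=
  List.Chain' (fun e f => sE e = rE f) l

/-- `FromV rE sE v l` : `l` is a finite path whose range (leftmost vertex) is `v`. -/
def FromV (rE sE : E → V) (v : V) (l : List E) : Prop :=
  IsTrail rE sE l ∧ ∀ e, l.head? = some e → rE e = v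

/-- The source (rightmost vertex) of the finite path `l` with range `v`. -/
def trailSrc (sE : E → V) (v : V) (l : List E) : V :=
  l.getLast?.elim v sE

/-- A (faithful) self-similar groupoid action `(G, E)` on the directed graph with
vertices `V`, edges `E`, range map `rE` and source map `sE`.  Here `d`/`c` are
the domain/codomain maps of the groupoid `G` (its units are `unit v` for
`v : V`), `mul h g` is the composite `h ∘ g` (junk unless `d h = c g`),
`act g l` is `g · l` for finite paths `l` with range `d g` (junk otherwise)
and `res g l` is the restriction `g|_l` (junk otherwise). -/
structure SSA (V E : Type u) (rE sE : E → V) : Type (u + 1) where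
  G : Type u
  d : G → V
  c : G → V
  mul : G → G → G
  inv : G → G
  unit : V → G
  act : G → List E → List E
  res : G → List E → G
  d_unit : ∀ v, d (unit v) = v
  c_unit : ∀ v, c (unit v) = v
  d_mul : ∀ g h, d h = c g → d (mul h g) = d g
  c_mul : ∀ g h, d h = c g → c (mul h g) = c h
  mul_assoc : ∀ g h k, d h = c g → d k = c h → mul k (mul h g) = mul (mul k h) g
  unit_mul : ∀ g, mul (unit (c g)) g = g
  mul_unit : ∀ g, mul g (unit (d g)) = g
  d_inv : ∀ g, d (inv g) = c g
  c_inv : ∀ g, c (inv g) = d g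
  inv_mul : ∀ g, mul (inv g) g = unit (d g)
  mul_inv : ∀ g, mul g (inv g) = unit (c g)
  act_fromV : ∀ g l, FromV rE sE (d g) l → FromV rE sE (c g) (act g l)
  act_length : ∀ g l, FromV rE sE (d g) l → (act g l).length = l.length
  act_unit : ∀ v l, FromV rE sE v l → act (unit v) l = l
  act_mul : ∀ g h l, d h = c g → FromV rE sE (d g) l →
    act (mul h g) l = act h (act g l)
  faithful : ∀ g h, d g = d h → c g = c h →
    (∀ l, FromV rE sE (d g) l → act g l = act h l) → g = h
  res_nil : ∀ g, res g [] = g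
  d_res : ∀ g l, FromV rE sE (d g) l → d (res g l) = trailSrc sE (d g) l
  c_res : ∀ g l, FromV rE sE (d g) l → c (res g l) = trailSrc sE (c g) (act g l)
  res_append : ∀ g l m, FromV rE sE (d g) l →
    FromV rE sE (trailSrc sE (d g) l) m → res g (l ++ m) = res (res g l) m
  act_append : ∀ g l m, FromV rE sE (d g) l →
    FromV rE sE (trailSrc sE (d g) l) m →
    act g (l ++ m) = act g l ++ act (res g l) m

variable {rE sE : E → V}

/-- `F` is a contracting core for the self-similar groupoid action `A`. -/
def SSA.IsCore (A : SSA V E rE sE) (F : Set A.G) : Prop :=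
  F.Finite ∧ ∀ g : A.G, ∃ n : ℕ, ∀ l : List E,
    FromV rE sE (A.d g) l → l.length = n → A.res g l ∈ F

/-- The action is contracting if it admits a contracting core. -/
def SSA.Contracting (A : SSA V E rE sE) : Prop :=
  ∃ F : Set A.G, A.IsCore F

/-- The nucleus: the intersection of all contracting cores. -/
def SSA.nucleus (A : SSA V E rE sE) : Set A.G :=
  ⋂₀ {F : Set A.G | A.IsCore F}

/-- The action is recurrent. -/
def SSA.Recurrent (A : SSA V E rE sE) : Prop :=
  ∀ e f : E, ∀ h : A.G, A.d h = sE e → A.c h = sE f →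
    ∃ g : A.G, A.d g = rE e ∧ A.act g [e] = [f] ∧ A.res g [e] = h

/-- The action is level-transitive: any two paths of the same length lie in
one orbit. -/
def SSA.LevelTransitive (A : SSA V E rE sE) : Prop :=
  ∀ (v w : V) (l m : List E), FromV rE sE v l → FromV rE sE w m →
    l.length = m.length → ∃ g : A.G, A.d g = v ∧ A.c g = w ∧ A.act g l = m

/-- Every element of the groupoid is a finite composable product of
elements of `H`. -/
def SSA.GeneratedBy (A : SSA V E rE sE) (H : Set A.G) : Prop :=
  ∀ g : A.G, ∃ (h : A.G) (t : List A.G), h ∈ H ∧ (∀ k ∈ t, k ∈ H) ∧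
    List.Chain' (fun a b => A.d a = A.c b) (h :: t) ∧ t.foldl A.mul h = g

/-- The groupoid of the action is finitely generated. -/
def SSA.FinitelyGenerated (A : SSA V E rE sE) : Prop :=
  ∃ H : Set A.G, H.Finite ∧ A.GeneratedBy H

/-- The graph has no sources: every vertex receives an edge. -/
def NoSources (rE : E → V) : Prop := ∀ v : V, ∃ e : E, rE e = v

/-- The graph has no sinks: every vertex emits an edge. -/
def NoSinks (sE : E → V) : Prop := ∀ v : V, ∃ e : E, sE e = v

/-- The graph is strongly connected: it has an edge, and any ordered pair of
vertices is joined by a finite path. -/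
def StronglyConnected (rE sE : E → V) : Prop :=
  Nonempty E ∧ ∀ v w : V, ∃ l : List E, FromV rE sE v l ∧ trailSrc sE v l = w

/-- Right-infinite paths `y₁ y₂ y₃ …` (here `y k` is the edge `y_{k+1}`). -/
def RightPath (rE sE : E → V) : Type u :=
  {y : ℕ → E // ∀ k, sE (y k) = rE (y (k + 1))}

/-- The initial segment `y₁ … yₙ` of a right-infinite path. -/
def RightPath.trunc (y : RightPath rE sE) (n : ℕ) : List E :=
  (List.range n).map y.1

/-- The action is regular: whenever `g` fixes a right-infinite path `y`
(equivalently, all its initial segments), `g` acts trivially on some cylinder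
neighbourhood of `y`: some initial segment `μ` of `y` satisfies `g·μ = μ` and
`g|_μ = s(μ)`. -/
def SSA.Regular (A : SSA V E rE sE) : Prop :=
  ∀ (g : A.G) (y : RightPath rE sE), A.d g = rE (y.1 0) →
    (∀ n : ℕ, A.act g (y.trunc n) = y.trunc n) →
    ∃ n : ℕ, A.act g (y.trunc n) = y.trunc n ∧
      A.res g (y.trunc n) = A.unit (trailSrc sE (A.d g) (y.trunc n))

/-- Left-infinite paths `… x₋₂ x₋₁` (here `x k` is the edge `x_{-(k+1)}`). -/
def LeftPath (rE sE : E → V) : Type u :=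
  {x : ℕ → E // ∀ k, sE (x (k + 1)) = rE (x k)}

instance [TopologicalSpace E] : TopologicalSpace (LeftPath rE sE) :=
  inferInstanceAs (TopologicalSpace {x : ℕ → E // ∀ k, sE (x (k + 1)) = rE (x k)})

/-- The finite path `x₋ₘ … x₋₁`. -/
def LeftPath.trunc (x : LeftPath rE sE) (m : ℕ) : List E :=
  ((List.range m).reverse).map x.1

/-- The shift on left-infinite paths, deleting the rightmost edge. -/
def LeftPath.shift (x : LeftPath rE sE) : LeftPath rE sE :=
  ⟨fun k => x.1 (k + 1), fun k => x.2 (k + 1)⟩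

/-- Asymptotic equivalence of left-infinite paths: some sequence `(gₙ)` in the
groupoid with finitely many distinct values satisfies
`gₙ · (xₙ … x₋₁) = yₙ … y₋₁` for all `n < 0`. -/
def SSA.AsympEq (A : SSA V E rE sE) (x y : LeftPath rE sE) : Prop :=
  ∃ g : ℕ → A.G, (Set.range g).Finite ∧
    (∀ m : ℕ, A.d (g m) = rE (x.1 m)) ∧
    (∀ m : ℕ, A.act (g m) (x.trunc (m + 1)) = y.trunc (m + 1))

/-- The cylinder set `Z(l]` of left-infinite paths ending in `l`. -/
def cylL (rE sE : E → V) (l : List E) : Set (LeftPath rE sE) :=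
  {x : LeftPath rE sE | x.trunc l.length = l}

/-- The basic subset `U_l` of the limit space attached to a finite path `l`
with range `v`. -/
def SSA.limitU (A : SSA V E rE sE) (v : V) (l : List E) :
    Set (Quot A.AsympEq) :=
  {z : Quot A.AsympEq | ∀ x : LeftPath rE sE, Quot.mk A.AsympEq x = z →
    ∃ g ∈ A.nucleus, A.d g = v ∧ x ∈ cylL rE sE (A.act g l)}

/-- Bi-infinite paths `… x₋₁ x₀ x₁ …`. -/
def BiPath (rE sE : E → V) : Type u :=
  {x : ℤ → E // ∀ k : ℤ, sE (x k) = rE (x (k + 1))}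

instance [TopologicalSpace E] : TopologicalSpace (BiPath rE sE) :=
  inferInstanceAs (TopologicalSpace {x : ℤ → E // ∀ k : ℤ, sE (x k) = rE (x (k + 1))})

/-- The finite segment `xₙ x_{n+1} … x_{n+m-1}` of a bi-infinite path. -/
def BiPath.seg (x : BiPath rE sE) (n : ℤ) (m : ℕ) : List E :=
  (List.range m).map fun i => x.1 (n + i)

/-- Asymptotic equivalence of bi-infinite paths: some sequence `(gₙ)_{n ∈ ℤ}`
with finitely many distinct values satisfies
`gₙ · (xₙ x_{n+1} …) = yₙ y_{n+1} …` for all `n`. -/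
def SSA.AsympEqZ (A : SSA V E rE sE) (x y : BiPath rE sE) : Prop :=
  ∃ g : ℤ → A.G, (Set.range g).Finite ∧
    (∀ n : ℤ, A.d (g n) = rE (x.1 n)) ∧
    (∀ (n : ℤ) (m : ℕ), A.act (g n) (x.seg n m) = y.seg n m)

/-- The left-infinite path `x(-∞, n) = … x_{n-1} xₙ` of a bi-infinite path. -/
def BiPath.tail (x : BiPath rE sE) (n : ℤ) : LeftPath rE sE :=
  ⟨fun k => x.1 (n - k), by
    intro k
    have h := x.2 (n - ((k : ℤ) + 1))
    have h2 : n - ((k : ℤ) + 1) + 1 = n - (k : ℤ) := by ring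
    have h3 : (n - ((k + 1 : ℕ) : ℤ)) = n - ((k : ℤ) + 1) := by push_cast; ring
    show sE (x.1 (n - ((k + 1 : ℕ) : ℤ))) = rE (x.1 (n - (k : ℤ)))
    rw [h3, ← h2]
    exact h⟩

/-- The translation `τ` on bi-infinite paths, `(τ x)ₙ = x_{n-1}`. -/
def BiPath.translate (x : BiPath rE sE) : BiPath rE sE :=
  ⟨fun m => x.1 (m - 1), by
    intro k
    have h := x.2 (k - 1)
    have h2 : (k - 1 + 1 : ℤ) = k + 1 - 1 := by ring
    rw [h2] at h
    exact h⟩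

/-- The shift homeomorphism `σ̃_∞` on the inverse limit `lim← (J, T)`. -/
def solShift {J : Type*} (T : J → J)
    (z : {z : ℕ → J // ∀ n, T (z (n + 1)) = z n}) :
    {z : ℕ → J // ∀ n, T (z (n + 1)) = z n} :=
  ⟨fun n => match n with
    | 0 => T (z.1 0)
    | m + 1 => z.1 m,
   fun n => match n with
    | 0 => rfl
    | m + 1 => z.2 m⟩

/-- The distance function of a bundled metric space. -/
def mdist {Y : Type*} (m : MetricSpace Y) (a b : Y) : ℝ := by
  letI := m; exact dist a b

/-- The open ball of a bundled metric space. -/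
def mball {Y : Type*} (m : MetricSpace Y) (a : Y) (r : ℝ) : Set Y := by
  letI := m; exact Metric.ball a r

/-- The topology induced by a bundled metric space. -/
def mtop {Y : Type*} (m : MetricSpace Y) : TopologicalSpace Y := by
  letI := m; exact inferInstance


set_option linter.dupNamespace false

variable {V E : Type u}
variable {rE sE : E → V}

/-- The finite path `z a, z (a+1), …, z (a+b-1)` along a sequence of edges. -/
def lseg (z : ℕ → E) (a b : ℕ) : List E := (List.range b).map fun i => z (a + i)

lemma lseg_append (z : ℕ → E) (a b c : ℕ) :
    lseg z a (b + c) = lseg z a b ++ lseg z (a + b) c := by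
  unfold lseg
  rw [List.range_add, List.map_append, List.map_map]
  congr 1
  apply List.map_congr_left
  intro i _
  simp only [Function.comp_apply]
  congr 1
  omega

lemma lseg_one (z : ℕ → E) (a : ℕ) : lseg z a 1 = [z a] := by
  simp [lseg, List.range_succ]

lemma lseg_congr {z z' : ℕ → E} {a b : ℕ} (hag : ∀ i < b, z (a + i) = z' (a + i)) :
    lseg z a b = lseg z' a b := by
  unfold lseg
  apply List.map_congr_left
  intro i hi
  exact hag i (List.mem_range.mp hi)

lemma lseg_eq_elim {z z' : ℕ → E} {a b : ℕ} (hl : lseg z a b = lseg z' a b) :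
    ∀ i < b, z (a + i) = z' (a + i) := by
  intro i hi
  exact List.map_eq_map_iff.mp hl i (List.mem_range.mpr hi)

lemma lseg_length (z : ℕ → E) (a b : ℕ) : (lseg z a b).length = b := by
  simp [lseg]

variable (rE sE) in
lemma lseg_fromV {z : ℕ → E} (hz : ∀ k, sE (z k) = rE (z (k + 1))) (a b : ℕ) :
    FromV rE sE (rE (z a)) (lseg z a b) := by
  constructor
  · unfold IsTrail lseg List.Chain'
    rw [List.isChain_map]
    cases b with
    | zero => simp
    | succ b =>
      rw [List.isChain_range_succ]
      intro m _
      have := hz (a + m)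
      simpa [Nat.add_assoc] using this
  · intro e he
    cases b with
    | zero => simp [lseg] at he
    | succ b =>
      unfold lseg at he
      rw [List.range_succ_eq_map] at he
      simp at he
      simp [he]

variable (rE sE) in
lemma lseg_trailSrc {z : ℕ → E} (hz : ∀ k, sE (z k) = rE (z (k + 1))) (a b : ℕ) :
    trailSrc sE (rE (z a)) (lseg z a b) = rE (z (a + b)) := by
  cases b with
  | zero => simp [trailSrc, lseg]
  | succ b =>
    unfold trailSrc lseg
    rw [List.range_succ]
    simp only [List.map_append, List.map_cons, List.map_nil]
    rw [List.getLast?_concat]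
    simp only [Option.elim]
    rw [hz (a + b)]
    congr 1

lemma fromV_append {v : V} {l m : List E} (hl : FromV rE sE v l)
    (hm : FromV rE sE (trailSrc sE v l) m) : FromV rE sE v (l ++ m) := by
  rcases l.eq_nil_or_concat with rfl | ⟨l', e, rfl⟩
  · simpa [trailSrc] using hm
  · rw [List.concat_eq_append] at *
    constructor
    · apply List.IsChain.append hl.1 hm.1
      intro a ha b hb
      have ha' : a = e := by
        rw [List.getLast?_concat] at ha
        exact (by simpa using ha : e = a).symm
      subst ha'
      have h2 := hm.2 b hb
      rw [h2]
      unfold trailSrc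
      rw [List.getLast?_concat]
      rfl
    · intro e' he'
      apply hl.2
      rw [← he', List.append_assoc]
      cases l' with
      | nil => rfl
      | cons f l'' => rfl

lemma SSA.res_unit (A : SSA V E rE sE) {v : V} {l : List E} (hl : FromV rE sE v l) :
    A.res (A.unit v) l = A.unit (trailSrc sE v l) := by
  have hdl : FromV rE sE (A.d (A.unit v)) l := by rw [A.d_unit]; exact hl
  have hd : A.d (A.res (A.unit v) l) = trailSrc sE v l := by
    rw [A.d_res _ _ hdl, A.d_unit]
  have hc : A.c (A.res (A.unit v) l) = trailSrc sE v l := by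
    rw [A.c_res _ _ hdl, A.c_unit, A.act_unit v l hl]
  apply A.faithful _ _ (by rw [hd, A.d_unit]) (by rw [hc, A.c_unit])
  intro m hm
  rw [hd] at hm
  have key := A.act_append (A.unit v) l m hdl (by rw [A.d_unit]; exact hm)
  rw [A.act_unit v l hl, A.act_unit v (l ++ m) (fromV_append hl hm)] at key
  rw [← List.append_cancel_left key]
  rw [A.act_unit _ m hm]

section Qmach

variable {A : SSA V E rE sE} {z zs : ℕ → E} {g0 : A.G}

lemma lseg_append' (z : ℕ → E) (a b : ℕ) :
    lseg z 0 (a + b) = lseg z 0 a ++ lseg z a b := by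
  simpa using lseg_append z 0 a b

lemma Q_fromV (hz : ∀ k, sE (z k) = rE (z (k + 1))) (hd : A.d g0 = rE (z 0)) (a : ℕ) :
    FromV rE sE (A.d g0) (lseg z 0 a) := by
  rw [hd]; exact lseg_fromV rE sE hz 0 a

lemma Q_fromV' (hz : ∀ k, sE (z k) = rE (z (k + 1))) (hd : A.d g0 = rE (z 0)) (a b : ℕ) :
    FromV rE sE (trailSrc sE (A.d g0) (lseg z 0 a)) (lseg z a b) := by
  rw [hd, lseg_trailSrc rE sE hz, Nat.zero_add]
  exact lseg_fromV rE sE hz a b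

lemma Q_d (hz : ∀ k, sE (z k) = rE (z (k + 1))) (hd : A.d g0 = rE (z 0)) (a : ℕ) :
    A.d (A.res g0 (lseg z 0 a)) = rE (z a) := by
  rw [A.d_res _ _ (Q_fromV hz hd a), hd, lseg_trailSrc rE sE hz, Nat.zero_add]

lemma Q_act (hz : ∀ k, sE (z k) = rE (z (k + 1))) (hd : A.d g0 = rE (z 0))
    (hact : ∀ k, A.act g0 (lseg z 0 k) = lseg zs 0 k) (a k : ℕ) :
    A.act (A.res g0 (lseg z 0 a)) (lseg z a k) = lseg zs a k := by
  have key := A.act_append g0 (lseg z 0 a) (lseg z a k) (Q_fromV hz hd a) (Q_fromV' hz hd a k)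
  rw [← lseg_append' z a k, hact (a + k), hact a, lseg_append' zs a k] at key
  exact (List.append_cancel_left key).symm

lemma Q_cocycle (hz : ∀ k, sE (z k) = rE (z (k + 1))) (hd : A.d g0 = rE (z 0)) (a b : ℕ) :
    A.res g0 (lseg z 0 (a + b)) = A.res (A.res g0 (lseg z 0 a)) (lseg z a b) := by
  rw [lseg_append' z a b]
  exact A.res_append _ _ _ (Q_fromV hz hd a) (Q_fromV' hz hd a b)

end Qmach

/-- The recursive chain of positions used in the pigeonhole argument. -/
def chainP {G : Type u} (N : G → ℕ) (Q : ℕ → G) : ℕ → ℕ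
  | 0 => 1 + N (Q 1)
  | (k + 1) => chainP N Q k + 1 + N (Q (chainP N Q k + 1))

lemma seg_eq_map (x : BiPath rE sE) (m0 : ℤ) (k : ℕ) :
    x.seg m0 k = List.map (fun i : ℕ => x.1 (m0 + (i : ℤ))) (List.range k) := by
  unfold BiPath.seg
  simp only [bind_pure_comp, List.map_eq_map, List.map_map]
  rfl


/-- asymptotically equivalent bi-infinite paths that agree on a
left tail are equal. -/
theorem asympEqZ_eq_of_eventually_eq
    [Fintype V] [Fintype E] (rE sE : E → V) (A : SSA V E rE sE)
    (hA : A.Contracting) (hreg : A.Regular)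
    (hso : NoSources rE) (hsi : NoSinks sE)
    (x y : BiPath rE sE) (hxy : A.AsympEqZ x y)
    (n : ℤ) (h : ∀ m : ℤ, m ≤ n → x.1 m = y.1 m) : x = y := by
  classical
  obtain ⟨g, hgfin, hgd, hgact⟩ := hxy
  obtain ⟨F, hFfin, hFcore⟩ := hA
  choose N hN using hFcore
  set Ffin := hFfin.toFinset with hFfindef
  set c := Ffin.card with hcdef
  have hSfin : (Set.range g ∪ F).Finite := hgfin.union hFfin
  set Sfin := hSfin.toFinset with hSfindef
  set D : Finset A.G :=
    Finset.image (fun p : A.G × E => A.res p.1 [p.2]) (Sfin ×ˢ Finset.univ) with hDdef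
  set B := D.sup N with hBdef
  set K := (c + 1) * (B + 1) with hKdef
  set m0 : ℤ := n + 1 - (K : ℤ) with hm0def
  set X : ℕ → E := fun k => x.1 (m0 + k) with hXdef
  set Y : ℕ → E := fun k => y.1 (m0 + k) with hYdef
  have hX : ∀ k, sE (X k) = rE (X (k + 1)) := by
    intro k
    simp only [hXdef]
    have := x.2 (m0 + k)
    have e : (m0 + ((k + 1 : ℕ) : ℤ)) = m0 + (k : ℤ) + 1 := by push_cast; ring
    rw [e]
    exact this
  set g0 := g m0 with hg0def
  have hd0 : A.d g0 = rE (X 0) := by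
    have := hgd m0
    simp only [hXdef]
    simpa using this
  have hsegx : ∀ k, lseg X 0 k = x.seg m0 k := by
    intro k
    rw [seg_eq_map]
    unfold lseg
    apply List.map_congr_left
    intro i _
    simp only [hXdef]
    congr 1
    push_cast
    ring
  have hsegy : ∀ k, lseg Y 0 k = y.seg m0 k := by
    intro k
    rw [seg_eq_map]
    unfold lseg
    apply List.map_congr_left
    intro i _
    simp only [hYdef]
    congr 1
    push_cast
    ring
  have hact0 : ∀ k, A.act g0 (lseg X 0 k) = lseg Y 0 k := by
    intro k
    rw [hsegx, hsegy]
    exact hgact m0 k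
  set Q : ℕ → A.G := fun a => A.res g0 (lseg X 0 a) with hQdef
  have hQco : ∀ a b, Q (a + b) = A.res (Q a) (lseg X a b) := by
    intro a b
    simp only [hQdef]
    exact Q_cocycle hX hd0 a b
  have hQd : ∀ a, A.d (Q a) = rE (X a) := by
    intro a
    simp only [hQdef]
    exact Q_d hX hd0 a
  have hQact : ∀ a k, A.act (Q a) (lseg X a k) = lseg Y a k := by
    intro a k
    simp only [hQdef]
    exact Q_act hX hd0 hact0 a k
  have hQsucc : ∀ p, Q (p + 1) = A.res (Q p) [X p] := by
    intro p
    have := hQco p 1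
    rwa [lseg_one] at this
  have hQ0 : Q 0 = g0 := by
    simp only [hQdef]
    have : lseg X 0 0 = [] := rfl
    rw [this]
    exact A.res_nil g0
  have hstep : ∀ p : ℕ, Q (p + 1 + N (Q (p + 1))) ∈ F := by
    intro p
    rw [hQco (p + 1) (N (Q (p + 1)))]
    exact hN _ _ (by rw [hQd (p + 1)]; exact lseg_fromV rE sE hX (p + 1) _)
      (lseg_length _ _ _)
  have hBb : ∀ p, Q p ∈ Sfin → N (Q (p + 1)) ≤ B := by
    intro p hp
    apply Finset.le_sup (f := N)
    rw [hQsucc p]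
    exact Finset.mem_image.mpr
      ⟨(Q p, X p), Finset.mem_product.mpr ⟨hp, Finset.mem_univ _⟩, rfl⟩
  have hFS : ∀ a, Q a ∈ Ffin → Q a ∈ Sfin := by
    intro a ha
    rw [hSfindef, Set.Finite.mem_toFinset]
    exact Or.inr ((hFfindef ▸ Set.Finite.mem_toFinset _).mp ha)
  have hg0S : Q 0 ∈ Sfin := by
    rw [hQ0, hSfindef, Set.Finite.mem_toFinset]
    exact Or.inl ⟨m0, rfl⟩
  set P := chainP N Q with hPdef
  have hP0 : P 0 = 0 + 1 + N (Q (0 + 1)) := by rw [hPdef]; simp [chainP]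
  have hPs : ∀ k, P (k + 1) = P k + 1 + N (Q (P k + 1)) := by
    intro k; rw [hPdef]; rfl
  have hPmem : ∀ k, Q (P k) ∈ Ffin := by
    intro k
    rw [hFfindef, Set.Finite.mem_toFinset]
    cases k with
    | zero => rw [hP0]; exact hstep 0
    | succ k => rw [hPs k]; exact hstep (P k)
  have hPbound : ∀ k, P k ≤ (k + 1) * (B + 1) := by
    intro k
    induction k with
    | zero =>
      have := hBb 0 hg0S
      rw [hP0]
      omega
    | succ k ih =>
      have h1 := hBb (P k) (hFS _ (hPmem k))
      have h2 : (k + 1 + 1) * (B + 1) = (k + 1) * (B + 1) + (B + 1) := by ring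
      rw [hPs k]
      omega
  have hPmono : StrictMono P := by
    apply strictMono_nat_of_lt_succ
    intro k
    rw [hPs k]
    omega
  have hcard : (Ffin).card < (Finset.univ : Finset (Fin (c + 1))).card := by
    rw [Finset.card_univ, Fintype.card_fin]
    omega
  obtain ⟨a1, a2, ha12, hwin, hkeq⟩ :
      ∃ a1 a2 : ℕ, a1 < a2 ∧ (m0 + (a2 : ℤ) ≤ n + 1) ∧ Q a1 = Q a2 := by
    obtain ⟨k1, -, k2, -, hne, heq⟩ :=
      Finset.exists_ne_map_eq_of_card_lt_of_maps_to hcard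
        (f := fun k : Fin (c + 1) => Q (P (k : ℕ))) (fun k _ => hPmem (k : ℕ))
    have hwinP : ∀ k : Fin (c + 1), (m0 + (P (k : ℕ) : ℤ) ≤ n + 1) := by
      intro k
      have h1 : P (k : ℕ) ≤ ((k : ℕ) + 1) * (B + 1) := hPbound _
      have h2 : (k : ℕ) < c + 1 := k.2
      have h3 : ((k : ℕ) + 1) * (B + 1) ≤ K := by
        rw [hKdef]
        exact Nat.mul_le_mul_right _ (by omega)
      have h4 : (P (k : ℕ) : ℤ) ≤ (K : ℤ) := by exact_mod_cast le_trans h1 h3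
      rw [hm0def]
      omega
    rcases lt_or_gt_of_ne (fun hv : (k1 : ℕ) = (k2 : ℕ) => hne (Fin.ext hv)) with hlt | hlt
    · exact ⟨P (k1 : ℕ), P (k2 : ℕ), hPmono hlt, hwinP k2, heq⟩
    · exact ⟨P (k2 : ℕ), P (k1 : ℕ), hPmono hlt, hwinP k1, heq.symm⟩
  obtain ⟨T, hT, haT⟩ : ∃ T : ℕ, 1 ≤ T ∧ a1 + T = a2 := ⟨a2 - a1, by omega, by omega⟩
  have hresT : A.res (Q a1) (lseg X a1 T) = Q a1 := by
    rw [← hQco a1 T, haT]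
    exact hkeq.symm
  have hagree : ∀ i, i < T → Y (a1 + i) = X (a1 + i) := by
    intro i hi
    have hle : (m0 + ((a1 + i : ℕ) : ℤ)) ≤ n := by
      have : ((a1 + i : ℕ) : ℤ) < (a2 : ℤ) := by exact_mod_cast (by omega : a1 + i < a2)
      omega
    simp only [hXdef, hYdef]
    exact (h _ hle).symm
  have hqd : A.d (Q a1) = rE (X a1) := hQd a1
  have hqactT : A.act (Q a1) (lseg X a1 T) = lseg X a1 T := by
    rw [hQact a1 T]
    exact lseg_congr hagree
  have hXr : rE (X a1) = rE (X a2) := by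
    rw [← hQd a1, ← hQd a2, hkeq]
  -- the periodic right-infinite path w
  have hmod : ∀ k : ℕ, (k + 1) % T = if k % T + 1 = T then 0 else k % T + 1 := by
    intro k
    have h0 := Nat.div_add_mod k T
    by_cases hc1 : k % T + 1 = T
    · rw [if_pos hc1]
      have e : k + 1 = T * (k / T + 1) := by
        rw [Nat.mul_add, Nat.mul_one]
        omega
      rw [e, Nat.mul_mod_right]
    · rw [if_neg hc1]
      have hlt : k % T < T := Nat.mod_lt k (by omega)
      have e : k + 1 = k % T + 1 + (k / T) * T := by
        rw [Nat.mul_comm]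
        omega
      rw [e, Nat.add_mul_mod_self_right, Nat.mod_eq_of_lt (by omega)]
  set wf : ℕ → E := fun k => X (a1 + k % T) with hwfdef
  have hwP : ∀ k, sE (wf k) = rE (wf (k + 1)) := by
    intro k
    simp only [hwfdef]
    rw [hmod k]
    by_cases hc1 : k % T + 1 = T
    · rw [if_pos hc1]
      rw [hX (a1 + k % T)]
      have e : a1 + k % T + 1 = a1 + T := by omega
      rw [e, haT, Nat.add_zero]
      exact hXr.symm
    · rw [if_neg hc1]
      rw [hX (a1 + k % T)]
      congr 1
  have hw0 : wf 0 = X a1 := by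
    simp only [hwfdef, Nat.zero_mod, Nat.add_zero]
  have hwmul : ∀ j, wf (j * T) = X a1 := by
    intro j
    simp only [hwfdef]
    rw [Nat.mul_mod_left, Nat.add_zero]
  have hblock : ∀ j : ℕ, lseg wf (j * T) T = lseg X a1 T := by
    intro j
    unfold lseg
    apply List.map_congr_left
    intro i hi
    simp only [hwfdef]
    congr 1
    rw [Nat.mul_comm j T, Nat.mul_add_mod, Nat.mod_eq_of_lt (List.mem_range.mp hi)]
  have hactnil : A.act (Q a1) [] = [] := by
    have hfv : FromV rE sE (A.d (Q a1)) [] := ⟨List.isChain_nil, by simp⟩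
    have := A.act_length (Q a1) [] hfv
    exact List.length_eq_zero_iff.mp this
  have hfromw : ∀ j, FromV rE sE (A.d (Q a1)) (lseg wf 0 j) := by
    intro j
    rw [hqd, ← hw0]
    exact lseg_fromV rE sE hwP 0 j
  have hmult : ∀ j : ℕ, A.act (Q a1) (lseg wf 0 (j * T)) = lseg wf 0 (j * T) ∧
      A.res (Q a1) (lseg wf 0 (j * T)) = Q a1 := by
    intro j
    induction j with
    | zero =>
      have e : lseg wf 0 (0 * T) = [] := by rw [Nat.zero_mul]; rfl
      rw [e]
      exact ⟨hactnil, A.res_nil _⟩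
    | succ j ih =>
      have e : (j + 1) * T = j * T + T := by ring
      have h2 : FromV rE sE (trailSrc sE (A.d (Q a1)) (lseg wf 0 (j * T)))
          (lseg wf (j * T) T) := by
        rw [hqd, ← hw0, lseg_trailSrc rE sE hwP, Nat.zero_add]
        exact lseg_fromV rE sE hwP (j * T) T
      constructor
      · rw [e, lseg_append' wf (j * T) T, A.act_append _ _ _ (hfromw (j * T)) h2, ih.1, ih.2,
          hblock j, hqactT, ← hblock j]
      · rw [e, lseg_append' wf (j * T) T, A.res_append _ _ _ (hfromw (j * T)) h2, ih.2,
          hblock j, hresT]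
  set w : RightPath rE sE := ⟨wf, hwP⟩ with hwdef
  have hw1 : w.1 = wf := rfl
  have htr : ∀ j, RightPath.trunc w j = lseg wf 0 j := by
    intro j
    unfold RightPath.trunc lseg
    rw [hw1]
    apply List.map_congr_left
    intro i _
    congr 1
    omega
  have hfixall : ∀ j, A.act (Q a1) (RightPath.trunc w j) = RightPath.trunc w j := by
    intro j
    rw [htr]
    obtain ⟨d', hd'⟩ : ∃ d', j * T = j + d' :=
      ⟨j * T - j, by have := Nat.le_mul_of_pos_right j (show 0 < T by omega); omega⟩
    have h2 : FromV rE sE (trailSrc sE (A.d (Q a1)) (lseg wf 0 j)) (lseg wf j d') := by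
      rw [hqd, ← hw0, lseg_trailSrc rE sE hwP, Nat.zero_add]
      exact lseg_fromV rE sE hwP j d'
    have key := A.act_append (Q a1) (lseg wf 0 j) (lseg wf j d') (hfromw j) h2
    rw [← lseg_append' wf j d', ← hd', (hmult j).1] at key
    have e2 : lseg wf 0 (j * T) = lseg wf 0 j ++ lseg wf j d' := by
      rw [hd']
      exact lseg_append' wf j d'
    rw [e2] at key
    have hlen : (lseg wf 0 j).length = (A.act (Q a1) (lseg wf 0 j)).length := by
      rw [A.act_length _ _ (hfromw j)]
    exact ((List.append_inj key hlen).1).symm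
  obtain ⟨n', -, hresn'⟩ := hreg (Q a1) w (by rw [hw1, hqd, ← hw0]) hfixall
  rw [htr] at hresn'
  have hv' : trailSrc sE (A.d (Q a1)) (lseg wf 0 n') = rE (wf n') := by
    rw [hqd, ← hw0, lseg_trailSrc rE sE hwP, Nat.zero_add]
  obtain ⟨d'', hd''⟩ : ∃ d'', n' * T = n' + d'' :=
    ⟨n' * T - n', by have := Nat.le_mul_of_pos_right n' (show 0 < T by omega); omega⟩
  have h2' : FromV rE sE (trailSrc sE (A.d (Q a1)) (lseg wf 0 n')) (lseg wf n' d'') := by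
    rw [hv']
    exact lseg_fromV rE sE hwP n' d''
  have hqunit : Q a1 = A.unit (rE (wf (n' + d''))) := by
    have e1 : A.res (Q a1) (lseg wf 0 (n' * T)) = Q a1 := (hmult n').2
    rw [hd'', lseg_append' wf n' d'', A.res_append _ _ _ (hfromw n') h2', hresn',
      hv', A.res_unit (lseg_fromV rE sE hwP n' d''), lseg_trailSrc rE sE hwP n' d''] at e1
    exact e1.symm
  have hvert : rE (wf (n' + d'')) = rE (X a1) := by
    have h5 := hqd
    rw [hqunit, A.d_unit] at h5
    exact h5
  rw [hvert] at hqunit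
  have hfin : ∀ k, lseg Y a1 k = lseg X a1 k := by
    intro k
    rw [← hQact a1 k, hqunit, A.act_unit _ _ (lseg_fromV rE sE hX a1 k)]
  have hpt : ∀ i : ℕ, Y (a1 + i) = X (a1 + i) := by
    intro i
    exact lseg_eq_elim (hfin (i + 1)) i (by omega)
  apply Subtype.ext
  funext j
  rcases le_or_gt j n with hj | hj
  · exact h j hj
  · have hj2 : m0 + (a1 : ℤ) ≤ n := by
      have : (a1 : ℤ) < (a2 : ℤ) := by exact_mod_cast ha12
      omega
    obtain ⟨i, hi⟩ : ∃ i : ℕ, (m0 + ((a1 + i : ℕ) : ℤ)) = j :=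
      ⟨(j - (m0 + (a1 : ℤ))).toNat, by push_cast; omega⟩
    have h6 := hpt i
    simp only [hXdef, hYdef] at h6
    rw [hi] at h6
    exact h6.symm


end SSG
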